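/- arXiv:0712.3135 — 2 statements merged into one kernel-verified Lean document; each statement's English description precedes it below -/
import Mathlib

section
/- Let A, dA be disjoint finite subsets of G and set ν_{A,dA} = (∏_{x∈A} ν_x) * (∏_{y∈dA} ν̄_y) in the group algebra of H ≀ G, where ν̄_y = δ_{(1,e)} − ν_y. Then ν_{A,dA} is idempotent: ν_{A,dA} * ν_{A,dA} = ν_{A,dA}, and its value at the identity is ν_{A,dA}(1,e) = p^{|A|}(1−p)^{|dA|} where p = 1/|H|. -/
open Function MonoidAlgebra
open scoped Classical
set_option linter.unusedSectionVars false

noncomputable section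

variable (G H : Type) [Group G] [Group H] [Fintype H]

/-- The automorphism `L_g` of the full group of configurations `G → H`,
`(L_g η)(x) = η (g⁻¹ x)`. -/
def lampAut (g : G) : (G → H) ≃* (G → H) where
  toFun η := fun x => η (g⁻¹ * x)
  invFun η := fun x => η (g * x)
  left_inv η := by funext x; simp [← mul_assoc]
  right_inv η := by funext x; simp [← mul_assoc]
  map_mul' η η' := rfl

/-- The action homomorphism `G →* MulAut (G → H)`. -/
def lampHom : G →* MulAut (G → H) where
  toFun := lampAut G H
  map_one' := by ext η x; simp [lampAut]
  map_mul' g₁ g₂ := by ext η x; simp [lampAut, MulAut.mul_apply, mul_assoc]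

/-- The unrestricted wreath product `(H^G) ⋊ G`. -/
abbrev WrFull := (G → H) ⋊[lampHom G H] G

/-- The (restricted) wreath product `H ≀ G = (⊕_G H) ⋊ G`, realized as the
subgroup of the unrestricted wreath product consisting of the elements whose
configuration has finite support. -/
def Wreath : Subgroup (WrFull G H) where
  carrier := {w | (mulSupport w.left).Finite}
  one_mem' := by
    simp only [Set.mem_setOf_eq, SemidirectProduct.one_left]
    simp [mulSupport]
  mul_mem' := by
    intro a b ha hb
    simp only [Set.mem_setOf_eq, SemidirectProduct.mul_left] at *
    refine (ha.union ?_).subset (mulSupport_mul _ _)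
    have : mulSupport (lampHom G H a.right b.left) =
        (fun x => (a.right)⁻¹ * x) ⁻¹' mulSupport b.left := by
      ext x
      simp [lampHom, lampAut, mulSupport]
    rw [this]
    exact hb.preimage (by
      intro x _ y _ h
      simpa using mul_left_cancel h)
  inv_mem' := by
    intro a ha
    simp only [Set.mem_setOf_eq, SemidirectProduct.inv_left] at *
    have : mulSupport (lampHom G H (a.right)⁻¹ (a.left)⁻¹) =
        (fun x => a.right * x) ⁻¹' mulSupport a.left := by
      ext x
      simp [lampHom, lampAut, mulSupport]
    rw [this]
    exact ha.preimage (by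
      intro x _ y _ h
      simpa using mul_left_cancel h)

/-- The configuration which has state `h` at the point `g` and is trivial
elsewhere. -/
def pointConf (g : G) (h : H) : G → H := fun x => if x = g then h else 1

lemma pointConf_finite (g : G) (h : H) : (mulSupport (pointConf G H g h)).Finite := by
  apply (Set.finite_singleton g).subset
  intro x hx
  by_contra hxg
  simp only [Set.mem_singleton_iff] at hxg
  simp [mulSupport, pointConf, hxg] at hx

/-- A finitely supported configuration together with a position, as an
element of the wreath product. -/
def wr (η : G → H) (hη : (mulSupport η).Finite) (g : G) : Wreath G H :=
  ⟨⟨η, g⟩, hη⟩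

/-- The embedding of the base group `G` in the wreath product, `g ↦ (1, g)`. -/
def embG (g : G) : Wreath G H :=
  wr G H 1 (by simp [mulSupport]) g

/-- The embedding of the lamp group `H` in the wreath product,
`h ↦ (η_e^h, e)`. -/
def embH (h : H) : Wreath G H :=
  wr G H (pointConf G H 1 h) (pointConf_finite G H 1 h) 1

/-- The point mass `δ_g` at the embedded element `g ∈ G`, as an element of the
group algebra of the wreath product. -/
def deltaG (g : G) : MonoidAlgebra ℝ (Wreath G H) :=
  MonoidAlgebra.single (embG G H g) 1

/-- The uniform probability measure `ν` on the embedded copy of `H` inside the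
wreath product. -/
def nu : MonoidAlgebra ℝ (Wreath G H) :=
  ∑ h : H, MonoidAlgebra.single (embH G H h) ((Fintype.card H : ℝ)⁻¹)

/-- The translated uniform measure `ν_g = δ_g * ν * δ_{g⁻¹}`. -/
def nuAt (g : G) : MonoidAlgebra ℝ (Wreath G H) :=
  deltaG G H g * nu G H * deltaG G H g⁻¹

/-- The complementary projection `ν̄_g = δ_{(1,e)} - ν_g`. -/
def nuBarAt (g : G) : MonoidAlgebra ℝ (Wreath G H) :=
  1 - nuAt G H g

end

noncomputable section Aux

variable (G H : Type) [Group G] [Group H] [Fintype H]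

local notation "p" => ((Fintype.card H : ℝ))⁻¹

lemma embG_mul (a b : G) : embG G H a * embG G H b = embG G H (a * b) := by
  apply Subtype.ext
  apply SemidirectProduct.ext
  · show (1 : G → H) * lampHom G H a 1 = 1
    simp
  · rfl

lemma deltaG_mul (a b : G) : deltaG G H a * deltaG G H b = deltaG G H (a * b) := by
  rw [deltaG, deltaG, MonoidAlgebra.single_mul_single, embG_mul, one_mul, deltaG]

lemma deltaG_one : deltaG G H 1 = 1 := by
  have : embG G H 1 = 1 := by
    apply Subtype.ext
    rfl
  rw [deltaG, this, MonoidAlgebra.one_def]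

/-- The conjugated lamp element `x (h at e) x⁻¹`. -/
def embHAt (x : G) (h : H) : Wreath G H := embG G H x * embH G H h * embG G H x⁻¹

lemma embHAt_val (x : G) (h : H) :
    ((embHAt G H x h : Wreath G H) : WrFull G H) = ⟨pointConf G H x h, 1⟩ := by
  apply SemidirectProduct.ext
  · show ((1 : G → H) * lampHom G H x (pointConf G H 1 h)) *
      lampHom G H (x * 1) 1 = pointConf G H x h
    funext z
    simp only [lampHom, lampAut, pointConf, MonoidHom.coe_mk, OneHom.coe_mk,
      MulEquiv.coe_mk, Equiv.coe_fn_mk, Pi.mul_apply, Pi.one_apply, map_one]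
    by_cases hz : z = x
    · simp [hz]
    · have h1 : ¬ (x⁻¹ * z = 1) := by simp [inv_mul_eq_one]; exact fun e => hz e.symm
      simp [hz, h1]
  · show x * 1 * x⁻¹ = 1
    simp

lemma embHAt_one (x : G) : embHAt G H x 1 = 1 := by
  apply Subtype.ext
  rw [embHAt_val]
  apply SemidirectProduct.ext
  · funext z
    simp [pointConf]
  · rfl

lemma embHAt_eq_one_iff (x : G) (h : H) : embHAt G H x h = 1 ↔ h = 1 := by
  constructor
  · intro he
    have := congrArg (fun w => ((w : Wreath G H) : WrFull G H).left x) he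
    simpa [embHAt_val, pointConf] using this
  · rintro rfl; exact embHAt_one G H x

lemma nuAt_eq (x : G) :
    nuAt G H x = ∑ h : H, MonoidAlgebra.single (embHAt G H x h) p := by
  rw [nuAt, nu, Finset.mul_sum, Finset.sum_mul]
  refine Finset.sum_congr rfl fun h _ => ?_
  rw [deltaG, deltaG, MonoidAlgebra.single_mul_single,
    MonoidAlgebra.single_mul_single, embHAt]
  ring_nf

end Aux

noncomputable section Aux2

variable (G H : Type) [Group G] [Group H] [Fintype H]

local notation "p" => ((Fintype.card H : ℝ))⁻¹
local notation "R" => MonoidAlgebra ℝ (Wreath G H)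

lemma embH_mul (h h' : H) : embH G H h * embH G H h' = embH G H (h * h') := by
  apply Subtype.ext
  apply SemidirectProduct.ext
  · show pointConf G H 1 h * lampHom G H 1 (pointConf G H 1 h') = pointConf G H 1 (h * h')
    rw [map_one]
    funext z
    by_cases hz : z = 1 <;> simp [pointConf, hz]
  · show (1 : G) * 1 = 1
    simp

lemma cardH_ne_zero : (Fintype.card H : ℝ) ≠ 0 := by
  exact_mod_cast Fintype.card_ne_zero

lemma nu_sq : nu G H * nu G H = nu G H := by
  rw [nu, Finset.sum_mul]
  have step : ∀ h : H,
      (MonoidAlgebra.single (embH G H h) p * ∑ h' : H, MonoidAlgebra.single (embH G H h') p)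
        = ∑ k : H, MonoidAlgebra.single (embH G H k) (p * p) := by
    intro h
    rw [Finset.mul_sum]
    refine Fintype.sum_equiv (Equiv.mulLeft h) _ _ fun h' => ?_
    rw [MonoidAlgebra.single_mul_single, embH_mul]
    rfl
  rw [Finset.sum_congr rfl fun h _ => step h, Finset.sum_const, Finset.card_univ]
  rw [Finset.smul_sum]
  refine Finset.sum_congr rfl fun k _ => ?_
  rw [MonoidAlgebra.smul_single]
  congr 1
  rw [nsmul_eq_mul]
  field_simp

lemma nuAt_idem (x : G) : nuAt G H x * nuAt G H x = nuAt G H x := by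
  have h1 : deltaG G H x⁻¹ * deltaG G H x = 1 := by
    rw [deltaG_mul, inv_mul_cancel, deltaG_one]
  rw [nuAt]
  simp only [mul_assoc]
  rw [← mul_assoc (deltaG G H x⁻¹) (deltaG G H x), h1, one_mul,
    ← mul_assoc (nu G H) (nu G H), nu_sq]

lemma nuBarAt_idem (x : G) : nuBarAt G H x * nuBarAt G H x = nuBarAt G H x := by
  rw [nuBarAt, sub_mul, one_mul, mul_sub, mul_one, nuAt_idem, sub_self, sub_zero]

lemma embHAt_commute {x y : G} (hxy : x ≠ y) (h h' : H) :
    embHAt G H x h * embHAt G H y h' = embHAt G H y h' * embHAt G H x h := by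
  apply Subtype.ext
  have key : ∀ (u v : G) (a b : H), u ≠ v →
      ((embHAt G H u a * embHAt G H v b : Wreath G H) : WrFull G H)
        = ⟨pointConf G H u a * pointConf G H v b, 1⟩ := by
    intro u v a b _
    show ((embHAt G H u a : Wreath G H) : WrFull G H)
        * ((embHAt G H v b : Wreath G H) : WrFull G H) = _
    rw [embHAt_val, embHAt_val]
    apply SemidirectProduct.ext
    · show pointConf G H u a * lampHom G H 1 (pointConf G H v b) = _
      rw [map_one]; rfl
    · show (1 : G) * 1 = 1; simp
  rw [key x y h h' hxy, key y x h' h hxy.symm]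
  apply SemidirectProduct.ext
  · show pointConf G H x h * pointConf G H y h' = pointConf G H y h' * pointConf G H x h
    funext z
    by_cases hzx : z = x
    · subst hzx; simp [pointConf, hxy]
    · by_cases hzy : z = y <;> simp [pointConf, hzx, hzy, hxy.symm]
  · rfl

lemma nuAt_commute {x y : G} (hxy : x ≠ y) : Commute (nuAt G H x) (nuAt G H y) := by
  rw [nuAt_eq, nuAt_eq]
  refine Commute.sum_left _ _ _ fun h _ => ?_
  refine Commute.sum_right _ _ _ fun h' _ => ?_
  show _ = _
  rw [MonoidAlgebra.single_mul_single, MonoidAlgebra.single_mul_single,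
    embHAt_commute G H hxy]

lemma nuAt_nuBar_commute {x y : G} (hxy : x ≠ y) :
    Commute (nuAt G H x) (nuBarAt G H y) := by
  rw [nuBarAt]
  exact (Commute.one_right _).sub_right (nuAt_commute G H hxy)

/-- The measure `μ` is supported on configurations supported in `S`, at base
position `1`. -/
def IsSuppIn (S : Set G) (μ : MonoidAlgebra ℝ (Wreath G H)) : Prop :=
  ∀ w ∈ μ.coeff.support, ((w : Wreath G H) : WrFull G H).right = 1 ∧
    Function.mulSupport ((w : Wreath G H) : WrFull G H).left ⊆ S

lemma isSuppIn_mono {S T : Set G} (hST : S ⊆ T) {μ : MonoidAlgebra ℝ (Wreath G H)}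
    (h : IsSuppIn G H S μ) : IsSuppIn G H T μ :=
  fun w hw => ⟨(h w hw).1, ((h w hw).2).trans hST⟩

lemma isSuppIn_one : IsSuppIn G H ∅ (1 : MonoidAlgebra ℝ (Wreath G H)) := by
  intro w hw
  rw [MonoidAlgebra.one_def, MonoidAlgebra.coeff_single] at hw
  have hw1 : w = 1 := by
    by_contra hne
    exact hne (Finset.mem_singleton.mp (Finsupp.support_single_subset hw))
  subst hw1
  constructor
  · rfl
  · intro z hz
    exact hz rfl

lemma isSuppIn_nuAt (x : G) : IsSuppIn G H {x} (nuAt G H x) := by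
  intro w hw
  rw [nuAt_eq] at hw
  simp only [MonoidAlgebra.coeff_sum, MonoidAlgebra.coeff_single] at hw
  have := Finsupp.support_finset_sum hw
  rw [Finset.mem_biUnion] at this
  obtain ⟨h, -, hmem⟩ := this
  have hw2 : w = embHAt G H x h :=
    Finset.mem_singleton.mp (Finsupp.support_single_subset hmem)
  subst hw2
  rw [embHAt_val]
  refine ⟨rfl, ?_⟩
  intro z hz
  by_contra hzx
  simp only [Set.mem_singleton_iff] at hzx
  exact hz (by simp [pointConf, hzx])

lemma isSuppIn_nuBarAt (x : G) : IsSuppIn G H {x} (nuBarAt G H x) := by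
  intro w hw
  rw [nuBarAt, MonoidAlgebra.coeff_sub] at hw
  have := Finsupp.support_sub hw
  rw [Finset.mem_union] at this
  rcases this with h1 | h2
  · exact isSuppIn_mono G H (Set.empty_subset _) (isSuppIn_one G H) w h1
  · exact isSuppIn_nuAt G H x w h2

lemma isSuppIn_mul {S T : Set G} {μ σ : MonoidAlgebra ℝ (Wreath G H)}
    (hμ : IsSuppIn G H S μ) (hσ : IsSuppIn G H T σ) :
    IsSuppIn G H (S ∪ T) (μ * σ) := by
  intro w hw
  have := MonoidAlgebra.support_coeff_mul_subset μ σ hw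
  rw [Finset.mem_mul] at this
  obtain ⟨a, ha, b, hb, hab⟩ := this
  subst hab
  obtain ⟨har, hal⟩ := hμ a ha
  obtain ⟨hbr, hbl⟩ := hσ b hb
  have hval : ((a * b : Wreath G H) : WrFull G H)
      = ((a : Wreath G H) : WrFull G H) * ((b : Wreath G H) : WrFull G H) := rfl
  constructor
  · rw [hval, SemidirectProduct.mul_right, har, hbr, mul_one]
  · rw [hval]
    have hleft : ((a : Wreath G H) : WrFull G H) * ((b : Wreath G H) : WrFull G H) =
        (⟨((a : Wreath G H) : WrFull G H).left * ((b : Wreath G H) : WrFull G H).left,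
          ((b : Wreath G H) : WrFull G H).right⟩ : WrFull G H) := by
      apply SemidirectProduct.ext
      · show _ * lampHom G H ((a : Wreath G H) : WrFull G H).right _ = _
        rw [har, map_one]; rfl
      · show ((a : Wreath G H) : WrFull G H).right * _ = _
        rw [har, one_mul]
    rw [hleft]
    refine (Function.mulSupport_mul _ _).trans ?_
    exact Set.union_subset_union hal hbl

lemma isSuppIn_inv_eq_one {S T : Set G} (hST : Disjoint S T) {a : Wreath G H}
    (ha : ((a : Wreath G H) : WrFull G H).right = 1 ∧
      Function.mulSupport ((a : Wreath G H) : WrFull G H).left ⊆ S)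
    (hb : ((a⁻¹ : Wreath G H) : WrFull G H).right = 1 ∧
      Function.mulSupport ((a⁻¹ : Wreath G H) : WrFull G H).left ⊆ T) :
    a = 1 := by
  obtain ⟨har, hal⟩ := ha
  obtain ⟨-, hbl⟩ := hb
  have hinv : ((a⁻¹ : Wreath G H) : WrFull G H) = ((a : Wreath G H) : WrFull G H)⁻¹ := rfl
  rw [hinv, SemidirectProduct.inv_left, har, inv_one, map_one] at hbl
  rw [MulAut.one_apply] at hbl
  have hsub : Function.mulSupport ((a : Wreath G H) : WrFull G H).left ⊆ T := by
    intro z hz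
    exact hbl (by simpa [Function.mulSupport] using hz)
  have hempty : Function.mulSupport ((a : Wreath G H) : WrFull G H).left = ∅ :=
    Set.subset_empty_iff.mp (fun z hz => (hST.le_bot ⟨hal hz, hsub hz⟩))
  have hleft : ((a : Wreath G H) : WrFull G H).left = 1 := by
    funext z
    by_contra hne
    exact Set.eq_empty_iff_forall_notMem.mp hempty z hne
  apply Subtype.ext
  apply SemidirectProduct.ext
  · exact hleft
  · exact har

lemma mul_apply_one_of_disjoint {S T : Set G} (hST : Disjoint S T)
    {μ σ : MonoidAlgebra ℝ (Wreath G H)}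
    (hμ : IsSuppIn G H S μ) (hσ : IsSuppIn G H T σ) :
    (μ * σ).coeff (1 : Wreath G H) = μ.coeff 1 * σ.coeff 1 := by
  classical
  rw [MonoidAlgebra.coeff_mul]
  rw [Finsupp.sum]
  have inner : ∀ a ∈ μ.coeff.support,
      (σ.coeff.sum fun a₂ b₂ => if a * a₂ = 1 then μ.coeff a * b₂ else 0)
        = if a = 1 then μ.coeff a * σ.coeff 1 else 0 := by
    intro a ha
    rw [Finsupp.sum]
    by_cases ha1 : a = 1
    · subst ha1
      simp only [one_mul, if_true]
      by_cases h1 : (1 : Wreath G H) ∈ σ.coeff.support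
      · rw [Finset.sum_eq_single 1]
        · simp
        · intro b hb hbne
          simp [hbne]
        · intro h; exact absurd h1 h
      · rw [Finsupp.notMem_support_iff.mp h1, mul_zero]
        refine Finset.sum_eq_zero fun b hb => ?_
        have : b ≠ 1 := fun e => h1 (e ▸ hb)
        simp [this]
    · rw [if_neg ha1]
      refine Finset.sum_eq_zero fun b hb => ?_
      have hne : a * b ≠ 1 := by
        intro he
        have hb' : b = a⁻¹ := (inv_eq_of_mul_eq_one_right he).symm
        apply ha1
        exact isSuppIn_inv_eq_one G H hST (hμ a ha) (hb' ▸ hσ b hb)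
      simp [hne]
  rw [Finset.sum_congr rfl inner]
  by_cases h1 : (1 : Wreath G H) ∈ μ.coeff.support
  · rw [Finset.sum_eq_single 1]
    · simp
    · intro b hb hbne
      simp [hbne]
    · intro h; exact absurd h1 h
  · rw [Finsupp.notMem_support_iff.mp h1, zero_mul]
    refine Finset.sum_eq_zero fun b hb => ?_
    have : b ≠ 1 := fun e => h1 (e ▸ hb)
    simp [this]

lemma nuAt_apply_one (x : G) : (nuAt G H x).coeff (1 : Wreath G H) = p := by
  rw [nuAt_eq, MonoidAlgebra.coeff_sum, Finsupp.finset_sum_apply]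
  have step : ∀ h : H,
      (MonoidAlgebra.single (embHAt G H x h) p).coeff (1 : Wreath G H)
        = if h = 1 then p else 0 := by
    intro h
    rw [MonoidAlgebra.single_apply]
    by_cases hh : h = 1
    · rw [if_pos ((embHAt_eq_one_iff G H x h).mpr hh), if_pos hh]
    · rw [if_neg (fun e => hh ((embHAt_eq_one_iff G H x h).mp e)), if_neg hh]
  rw [Finset.sum_congr rfl fun h _ => step h]
  simp

lemma nuBarAt_apply_one (x : G) : (nuBarAt G H x).coeff (1 : Wreath G H) = 1 - p := by
  rw [nuBarAt, MonoidAlgebra.coeff_sub, Finsupp.sub_apply, nuAt_apply_one]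
  congr 1
  rw [MonoidAlgebra.one_def, MonoidAlgebra.single_apply, if_pos rfl]

lemma noncommProd_idem (f : G → MonoidAlgebra ℝ (Wreath G H)) (s : Finset G)
    (hc : (s : Set G).Pairwise fun a b => Commute (f a) (f b))
    (hidem : ∀ x ∈ s, f x * f x = f x) :
    s.noncommProd f hc * s.noncommProd f hc = s.noncommProd f hc := by
  classical
  induction s using Finset.induction_on with
  | empty => simp
  | insert a s hnotmem ih =>
    have hc' : (s : Set G).Pairwise fun a b => Commute (f a) (f b) :=
      hc.mono (by simp [Finset.coe_insert, Set.subset_insert])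
    rw [Finset.noncommProd_insert_of_notMem _ _ _ _ hnotmem]
    have hcomm : Commute (f a) (s.noncommProd f hc') :=
      Finset.noncommProd_commute _ _ _ _ fun x hx =>
        (hc (Finset.mem_coe.mpr (Finset.mem_insert_self a s))
          (Finset.mem_coe.mpr (Finset.mem_insert_of_mem hx))
          (fun e => hnotmem (by rw [e]; exact hx)))
    have ha : f a * f a = f a := hidem a (Finset.mem_insert_self a s)
    have hs : s.noncommProd f hc' * s.noncommProd f hc' = s.noncommProd f hc' :=
      ih hc' fun x hx => hidem x (Finset.mem_insert_of_mem hx)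
    calc f a * s.noncommProd f hc' * (f a * s.noncommProd f hc')
        = f a * (s.noncommProd f hc' * f a) * s.noncommProd f hc' := by
          simp [mul_assoc]
      _ = f a * (f a * s.noncommProd f hc') * s.noncommProd f hc' := by
          rw [hcomm.eq]
      _ = (f a * f a) * (s.noncommProd f hc' * s.noncommProd f hc') := by
          simp [mul_assoc]
      _ = f a * s.noncommProd f hc' := by rw [ha, hs]

lemma noncommProd_suppIn_apply (f : G → MonoidAlgebra ℝ (Wreath G H)) (c : G → ℝ)
    (hf : ∀ x, IsSuppIn G H {x} (f x)) (hfc : ∀ x, (f x).coeff (1 : Wreath G H) = c x)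
    (s : Finset G)
    (hc : (s : Set G).Pairwise fun a b => Commute (f a) (f b)) :
    IsSuppIn G H (s : Set G) (s.noncommProd f hc) ∧
      (s.noncommProd f hc).coeff (1 : Wreath G H) = ∏ x ∈ s, c x := by
  classical
  induction s using Finset.induction_on with
  | empty =>
    constructor
    · rw [Finset.noncommProd_empty]
      simpa using isSuppIn_one G H
    · rw [Finset.noncommProd_empty, Finset.prod_empty]
      rw [MonoidAlgebra.one_def, MonoidAlgebra.single_apply, if_pos rfl]
  | insert a s hnotmem ih =>
    have hc' : (s : Set G).Pairwise fun a b => Commute (f a) (f b) :=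
      hc.mono (by simp [Finset.coe_insert, Set.subset_insert])
    obtain ⟨ihs, ihv⟩ := ih hc'
    rw [Finset.noncommProd_insert_of_notMem _ _ _ _ hnotmem]
    have hdisj : Disjoint ({a} : Set G) (s : Set G) := by
      simpa using hnotmem
    constructor
    · have := isSuppIn_mul G H (hf a) ihs
      rwa [show ({a} : Set G) ∪ (s : Set G) = ((insert a s : Finset G) : Set G) by
        simp] at this
    · rw [mul_apply_one_of_disjoint G H hdisj (hf a) ihs, hfc, ihv,
        Finset.prod_insert hnotmem]

end Aux2

/-- For disjoint finite sets `A, dA ⊆ G`, the element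
`ν_{A,dA} = (∏_{x∈A} ν_x) * (∏_{y∈dA} ν̄_y)` of the group algebra of `H ≀ G`
is idempotent, and its value at the identity `(1,e)` is `p^{|A|}(1-p)^{|dA|}`
where `p = 1/|H|`. -/
theorem nuBoundary_idempotent (G H : Type) [Group G] [Group H] [Fintype H]
    (A dA : Finset G) (hdisj : Disjoint A dA)
    (hcA : (A : Set G).Pairwise fun a b => Commute (nuAt G H a) (nuAt G H b))
    (hcdA : (dA : Set G).Pairwise fun a b => Commute (nuBarAt G H a) (nuBarAt G H b)) :
    (A.noncommProd (nuAt G H) hcA * dA.noncommProd (nuBarAt G H) hcdA) *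
      (A.noncommProd (nuAt G H) hcA * dA.noncommProd (nuBarAt G H) hcdA)
      = A.noncommProd (nuAt G H) hcA * dA.noncommProd (nuBarAt G H) hcdA ∧
    (A.noncommProd (nuAt G H) hcA * dA.noncommProd (nuBarAt G H) hcdA).coeff
        (1 : Wreath G H)
      = ((Fintype.card H : ℝ))⁻¹ ^ A.card
          * (1 - ((Fintype.card H : ℝ))⁻¹) ^ dA.card := by
    classical
  set PA := A.noncommProd (nuAt G H) hcA with hPAdef
  set PD := dA.noncommProd (nuBarAt G H) hcdA with hPDdef
  have hPA2 : PA * PA = PA :=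
    noncommProd_idem G H _ A hcA fun x _ => nuAt_idem G H x
  have hPD2 : PD * PD = PD :=
    noncommProd_idem G H _ dA hcdA fun x _ => nuBarAt_idem G H x
  have hcross : ∀ y ∈ dA, Commute PA (nuBarAt G H y) := by
    intro y hy
    refine (Finset.noncommProd_commute A (nuAt G H) hcA (nuBarAt G H y)
      fun x hx => ?_).symm
    have hne : x ≠ y := fun e => (Finset.disjoint_left.mp hdisj hx) (by rw [e]; exact hy)
    exact (nuAt_nuBar_commute G H hne).symm
  have hcomm : Commute PA PD :=
    Finset.noncommProd_commute dA (nuBarAt G H) hcdA PA hcross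
  obtain ⟨hsA, hvA⟩ := noncommProd_suppIn_apply G H (nuAt G H)
    (fun _ => ((Fintype.card H : ℝ))⁻¹) (isSuppIn_nuAt G H)
    (nuAt_apply_one G H) A hcA
  obtain ⟨hsD, hvD⟩ := noncommProd_suppIn_apply G H (nuBarAt G H)
    (fun _ => 1 - ((Fintype.card H : ℝ))⁻¹) (isSuppIn_nuBarAt G H)
    (nuBarAt_apply_one G H) dA hcdA
  have hdisj' : Disjoint (A : Set G) (dA : Set G) :=
    Finset.disjoint_coe.mpr hdisj
  constructor
  · calc (PA * PD) * (PA * PD) = PA * (PD * PA) * PD := by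
          simp only [mul_assoc]
      _ = PA * (PA * PD) * PD := by rw [← hcomm.eq]
      _ = (PA * PA) * (PD * PD) := by simp only [mul_assoc]
      _ = PA * PD := by rw [hPA2, hPD2]
  · rw [mul_apply_one_of_disjoint G H hdisj' hsA hsD, hvA, hvD,
      Finset.prod_const, Finset.prod_const]
end

section
/- Let G be a group with finite symmetric generating set S, μ symmetric probability supported on S, H a finite group with p = 1/|H|. Consider the random walk with 'lamps on edges': state space (⊕_E H) ⋊ G where E is the edge set of the Cayley graph, and law μ̃_ed(η, g) = μ(g)/|H| if g ∈ S and supp(η) ⊆ {[e,g]}, and 0 otherwise. Then μ̃_ed^{(n)}(1, e) = E[ p^{|{[Z_0,Z_1], ..., [Z_{n-1},Z_n]}|} · 1_{Z_n = e} ], the expectation of p to the number of distinct edges crossed by the μ-random walk (Z_k) returning to e at time n. -/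
open Function MonoidAlgebra
open scoped Classical
set_option linter.unusedSectionVars false

noncomputable section

variable (G H : Type) [Group G] [Group H] [Fintype H]

/-- Left translation of `G` on unoriented edges (elements of `Sym2 G`). -/
def edgeSmul (g : G) (e : Sym2 G) : Sym2 G := Sym2.map (fun x => g * x) e

lemma edgeSmul_edgeSmul (g g' : G) (e : Sym2 G) :
    edgeSmul G g (edgeSmul G g' e) = edgeSmul G (g * g') e := by
  unfold edgeSmul
  rw [Sym2.map_map]
  congr 1
  funext x
  simp [mul_assoc]

lemma edgeSmul_one (e : Sym2 G) : edgeSmul G 1 e = e := by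
  unfold edgeSmul
  simpa using congrFun Sym2.map_id e

lemma edgeSmul_injective (g : G) : Function.Injective (edgeSmul G g) := by
  intro e₁ e₂ h
  have := congrArg (edgeSmul G g⁻¹) h
  rwa [edgeSmul_edgeSmul, edgeSmul_edgeSmul, inv_mul_cancel, edgeSmul_one,
    edgeSmul_one] at this

/-- The automorphism of edge configurations induced by `g ∈ G`. -/
def lampAutE (g : G) : (Sym2 G → H) ≃* (Sym2 G → H) where
  toFun η := fun e => η (edgeSmul G g⁻¹ e)
  invFun η := fun e => η (edgeSmul G g e)
  left_inv η := by
    funext e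
    show η (edgeSmul G g⁻¹ (edgeSmul G g e)) = η e
    rw [edgeSmul_edgeSmul, inv_mul_cancel, edgeSmul_one]
  right_inv η := by
    funext e
    show η (edgeSmul G g (edgeSmul G g⁻¹ e)) = η e
    rw [edgeSmul_edgeSmul, mul_inv_cancel, edgeSmul_one]
  map_mul' η η' := rfl

/-- The action homomorphism `G →* MulAut (Sym2 G → H)`. -/
def lampHomE : G →* MulAut (Sym2 G → H) where
  toFun := lampAutE G H
  map_one' := by
    ext η e
    simp [lampAutE, edgeSmul_one]
  map_mul' g₁ g₂ := by
    ext η e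
    simp [lampAutE, MulAut.mul_apply, edgeSmul_edgeSmul]

/-- The unrestricted wreath product over the edge set. -/
abbrev WrEFull := (Sym2 G → H) ⋊[lampHomE G H] G

/-- The wreath product `(⊕_E H) ⋊ G` with lamps on the (unoriented) edges,
realized as the subgroup of finitely supported configurations. -/
def WreathE : Subgroup (WrEFull G H) where
  carrier := {w | (mulSupport w.left).Finite}
  one_mem' := by
    simp only [Set.mem_setOf_eq, SemidirectProduct.one_left]
    simp [mulSupport]
  mul_mem' := by
    intro a b ha hb
    simp only [Set.mem_setOf_eq, SemidirectProduct.mul_left] at *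
    refine (ha.union ?_).subset (mulSupport_mul _ _)
    have : mulSupport (lampHomE G H a.right b.left) =
        edgeSmul G (a.right)⁻¹ ⁻¹' mulSupport b.left := by
      ext e
      simp [lampHomE, lampAutE, mulSupport]
    rw [this]
    exact hb.preimage ((edgeSmul_injective G _).injOn)
  inv_mem' := by
    intro a ha
    simp only [Set.mem_setOf_eq, SemidirectProduct.inv_left] at *
    have : mulSupport (lampHomE G H (a.right)⁻¹ (a.left)⁻¹) =
        edgeSmul G a.right ⁻¹' mulSupport a.left := by
      ext e
      simp [lampHomE, lampAutE, mulSupport]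
    rw [this]
    exact ha.preimage ((edgeSmul_injective G _).injOn)

/-- The edge configuration with state `h` on the edge `e₀` and trivial
elsewhere. -/
def pointConfE (e₀ : Sym2 G) (h : H) : Sym2 G → H := fun e => if e = e₀ then h else 1

lemma pointConfE_finite (e₀ : Sym2 G) (h : H) :
    (mulSupport (pointConfE G H e₀ h)).Finite := by
  apply (Set.finite_singleton e₀).subset
  intro e he
  by_contra heq
  simp only [Set.mem_singleton_iff] at heq
  simp [mulSupport, pointConfE, heq] at he

/-- Element of the edge wreath product from a finitely supported edge
configuration and a position. -/
def wrE (η : Sym2 G → H) (hη : (mulSupport η).Finite) (g : G) : WreathE G H :=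
  ⟨⟨η, g⟩, hη⟩

/-- The embedding of the base group. -/
def embGE (g : G) : WreathE G H :=
  wrE G H 1 (by simp [mulSupport]) g

/-- The point mass at the embedded `g ∈ G`. -/
def deltaGE (g : G) : MonoidAlgebra ℝ (WreathE G H) :=
  MonoidAlgebra.single (embGE G H g) 1

/-- The uniform measure on the lamp group sitting on the edge `e₀`. -/
def nuEdge (e₀ : Sym2 G) : MonoidAlgebra ℝ (WreathE G H) :=
  ∑ h : H, MonoidAlgebra.single
    (wrE G H (pointConfE G H e₀ h) (pointConfE_finite G H e₀ h) 1)
    ((Fintype.card H : ℝ)⁻¹)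

end

noncomputable section Helpers

open Finset in
lemma sum_pi_cons {β : Type*} [Fintype β] {M : Type*} [AddCommMonoid M] (n : ℕ)
    (f : (Fin (n + 1) → β) → M) :
    ∑ h : Fin (n + 1) → β, f h = ∑ b : β, ∑ h : Fin n → β, f (Fin.cons b h) := by
  rw [← (Fintype.sum_equiv (Fin.consEquiv fun _ => β)
    (fun p => f (Fin.cons p.1 p.2)) f fun p => rfl)]
  exact Fintype.sum_prod_type _

lemma pow_eq_sum_ofFn {R : Type*} [Semiring R] {ι : Type*} (s : Finset ι) (f : ι → R) :
    ∀ n : ℕ, (∑ i ∈ s, f i) ^ n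
      = ∑ q : Fin n → {i // i ∈ s}, (List.ofFn fun k => f (q k)).prod
  | 0 => by
    rw [pow_zero, Fintype.sum_subsingleton _ (fun i : Fin 0 => Fin.elim0 i)]
    simp
  | (n + 1) => by
    rw [pow_succ', pow_eq_sum_ofFn s f n, ← Finset.sum_coe_sort s f,
      Finset.sum_mul_sum, sum_pi_cons]
    refine Finset.sum_congr rfl fun b _ => Finset.sum_congr rfl fun q _ => ?_
    rw [List.ofFn_succ, List.prod_cons]
    simp [Fin.cons_succ]

lemma prod_ofFn_smul {A : Type*} [Semiring A] [Algebra ℝ A] :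
    ∀ (n : ℕ) (c : Fin n → ℝ) (x : Fin n → A),
      (List.ofFn fun k => c k • x k).prod = (∏ k, c k) • (List.ofFn fun k => x k).prod
  | 0, c, x => by simp
  | (n + 1), c, x => by
    rw [List.ofFn_succ, List.ofFn_succ, List.prod_cons, List.prod_cons,
      prod_ofFn_smul n _ _, Fin.prod_univ_succ, smul_mul_assoc, mul_smul_comm,
      smul_smul]

variable (G H : Type) [Group G] [Group H] [Fintype H]

lemma lampHomE_apply (g : G) (η : Sym2 G → H) (e : Sym2 G) :
    lampHomE G H g η e = η (edgeSmul G g⁻¹ e) := rfl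

lemma wrE_mul' (η η' η₂ : Sym2 G → H) (hη : (Function.mulSupport η).Finite)
    (hη' : (Function.mulSupport η').Finite) (h₂ : (Function.mulSupport η₂).Finite)
    (g g' g₂ : G)
    (hconf : (fun e => η e * η' (edgeSmul G g⁻¹ e)) = η₂) (hg : g * g' = g₂) :
    wrE G H η hη g * wrE G H η' hη' g' = wrE G H η₂ h₂ g₂ := by
  subst hconf hg
  apply Subtype.ext
  rfl

lemma wrE_eq_one (η : Sym2 G → H) (hη : (Function.mulSupport η).Finite) (g : G) :
    wrE G H η hη g = 1 ↔ η = 1 ∧ g = 1 := by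
  rw [← Subtype.coe_inj]
  show (⟨η, g⟩ : WrEFull G H) = 1 ↔ _
  constructor
  · intro h
    exact ⟨by simpa using congrArg SemidirectProduct.left h,
      by simpa using congrArg SemidirectProduct.right h⟩
  · rintro ⟨rfl, rfl⟩
    rfl

/-- Prefix products of the path. -/
def preP {n : ℕ} (q : Fin n → G) (k : ℕ) : G := ((List.ofFn q).take k).prod

/-- The `k`-th edge crossed by the path. -/
def edgeAt {n : ℕ} (q : Fin n → G) (k : ℕ) : Sym2 G :=
  s(preP G q k, preP G q (k + 1))

/-- Ordered product along a fiber. -/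
def fProdH {X : Type*} {n : ℕ} (E : Fin n → X) (h : Fin n → H) (e : X) : H :=
  (List.ofFn fun k => if E k = e then h k else 1).prod

/-- The lamp configuration produced by path `q` with lamp increments `h`. -/
def confE {n : ℕ} (q : Fin n → G) (h : Fin n → H) : Sym2 G → H :=
  fun e => fProdH H (fun k : Fin n => edgeAt G q k) h e

lemma confE_finite {n : ℕ} (q : Fin n → G) (h : Fin n → H) :
    (Function.mulSupport (confE G H q h)).Finite := by
  apply Set.Finite.subset
    (Finset.finite_toSet (Finset.image (fun k : Fin n => edgeAt G q k) Finset.univ))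
  intro e he
  by_contra hne
  apply he
  show confE G H q h e = 1
  unfold confE fProdH
  apply List.prod_eq_one
  intro x hx
  rw [List.mem_ofFn] at hx
  obtain ⟨k, rfl⟩ := hx
  exact if_neg fun hk => hne (by
    rw [← hk]
    exact Finset.mem_coe.mpr (Finset.mem_image_of_mem _ (Finset.mem_univ k)))

lemma preP_zero {n : ℕ} (q : Fin n → G) : preP G q 0 = 1 := rfl

lemma preP_cons_succ {n : ℕ} (t : G) (q : Fin n → G) (k : ℕ) :
    preP G (Fin.cons t q) (k + 1) = t * preP G q k := by
  unfold preP
  rw [List.ofFn_succ]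
  simp [Fin.cons_succ]

lemma edgeAt_cons_zero {n : ℕ} (t : G) (q : Fin n → G) :
    edgeAt G (Fin.cons t q) 0 = s((1 : G), t) := by
  unfold edgeAt
  rw [preP_cons_succ, preP_zero, preP_zero, mul_one]

lemma edgeAt_cons_succ {n : ℕ} (t : G) (q : Fin n → G) (k : ℕ) :
    edgeAt G (Fin.cons t q) (k + 1) = edgeSmul G t (edgeAt G q k) := by
  unfold edgeAt edgeSmul
  rw [preP_cons_succ, preP_cons_succ]
  simp [Sym2.map_pair_eq]

lemma fProdH_cons {X : Type*} {n : ℕ} (e₀ : X) (E : Fin n → X) (h₀ : H)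
    (h : Fin n → H) (e : X) :
    fProdH H (Fin.cons e₀ E) (Fin.cons h₀ h) e
      = (if e₀ = e then h₀ else 1) * fProdH H E h e := by
  unfold fProdH
  rw [List.ofFn_succ]
  simp [Fin.cons_succ]

lemma confE_cons {n : ℕ} (t : G) (q : Fin n → G) (h₀ : H) (h : Fin n → H) :
    confE G H (Fin.cons t q) (Fin.cons h₀ h)
      = pointConfE G H s((1 : G), t) h₀ * ⇑(lampHomE G H t) (confE G H q h) := by
  have hE : (fun k : Fin (n + 1) => edgeAt G (Fin.cons t q) ↑k)
      = Fin.cons s((1 : G), t) (fun k : Fin n => edgeSmul G t (edgeAt G q ↑k)) := by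
    funext k
    refine Fin.cases ?_ ?_ k
    · simpa using edgeAt_cons_zero G t q
    · intro i
      simp only [Fin.cons_succ, Fin.val_succ]
      exact edgeAt_cons_succ G t q i
  funext e
  show fProdH H (fun k : Fin (n + 1) => edgeAt G (Fin.cons t q) ↑k) (Fin.cons h₀ h) e = _
  rw [hE, fProdH_cons]
  have hiff : ∀ a : Sym2 G, (edgeSmul G t a = e) ↔ (a = edgeSmul G t⁻¹ e) := by
    intro a
    constructor
    · rintro rfl
      rw [edgeSmul_edgeSmul, inv_mul_cancel, edgeSmul_one]
    · rintro rfl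
      rw [edgeSmul_edgeSmul, mul_inv_cancel, edgeSmul_one]
  have h2 : fProdH H (fun k : Fin n => edgeSmul G t (edgeAt G q ↑k)) h e
      = confE G H q h (edgeSmul G t⁻¹ e) := by
    unfold fProdH confE fProdH
    refine congrArg List.prod (congrArg List.ofFn ?_)
    funext k
    by_cases hc : edgeAt G q ↑k = edgeSmul G t⁻¹ e
    · rw [if_pos ((hiff _).mpr hc), if_pos hc]
    · rw [if_neg (fun hh => hc ((hiff _).mp hh)), if_neg hc]
  rw [h2]
  show _ = pointConfE G H s((1 : G), t) h₀ e * ⇑(lampHomE G H t) (confE G H q h) e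
  rw [lampHomE_apply]
  congr 1
  unfold pointConfE
  by_cases he : e = s((1 : G), t)
  · rw [if_pos he, if_pos he.symm]
  · rw [if_neg he, if_neg fun hh => he hh.symm]

/-- One step of the edge-lamplighter walk. -/
def stepE (t : G) : MonoidAlgebra ℝ (WreathE G H) :=
  nuEdge G H s((1 : G), t) * deltaGE G H t

lemma stepE_eq (t : G) :
    stepE G H t = ∑ h : H, MonoidAlgebra.single
      (wrE G H (pointConfE G H s((1 : G), t) h)
        (pointConfE_finite G H s((1 : G), t) h) t) ((Fintype.card H : ℝ)⁻¹) := by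
  unfold stepE nuEdge deltaGE
  rw [Finset.sum_mul]
  refine Finset.sum_congr rfl fun h _ => ?_
  rw [MonoidAlgebra.single_mul_single, mul_one]
  congr 1
  show _ * wrE G H 1 (by simp [Function.mulSupport]) t = _
  refine wrE_mul' G H _ _ _ _ _ _ _ _ _ ?_ (one_mul t)
  funext e
  simp only [Pi.one_apply, mul_one]

lemma prod_stepE : ∀ (n : ℕ) (q : Fin n → G),
    (List.ofFn fun i => stepE G H (q i)).prod
      = ∑ h : Fin n → H, MonoidAlgebra.single
          (wrE G H (confE G H q h) (confE_finite G H q h) ((List.ofFn q).prod))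
          ((Fintype.card H : ℝ)⁻¹ ^ n)
  | 0, q => by
    rw [List.ofFn_zero, List.prod_nil, pow_zero,
      Fintype.sum_subsingleton _ (fun i : Fin 0 => (1 : H))]
    have h1 : wrE G H (confE G H q fun _ => 1) (confE_finite G H q fun _ => 1)
        ((List.ofFn q).prod) = 1 := by
      rw [wrE_eq_one]
      constructor
      · funext e
        show fProdH H _ _ e = 1
        simp [fProdH]
      · simp
    rw [h1]
    exact MonoidAlgebra.one_def.symm
  | (n + 1), q => by
    obtain ⟨t, q', rfl⟩ : ∃ t q', q = Fin.cons t q' :=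
      ⟨q 0, Fin.tail q, (Fin.cons_self_tail q).symm⟩
    have hl : (List.ofFn fun i : Fin (n + 1) => stepE G H (Fin.cons (α := fun _ => G) t q' i))
        = stepE G H t :: List.ofFn fun i : Fin n => stepE G H (q' i) := by
      rw [List.ofFn_succ]
      simp [Fin.cons_succ]
    rw [hl, List.prod_cons, prod_stepE n q', stepE_eq, Finset.sum_mul_sum,
      sum_pi_cons]
    refine Finset.sum_congr rfl fun h₀ _ => Finset.sum_congr rfl fun h _ => ?_
    rw [MonoidAlgebra.single_mul_single]
    have hg : t * (List.ofFn q').prod = (List.ofFn (Fin.cons t q')).prod := by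
      rw [List.ofFn_succ]
      simp [Fin.cons_succ]
    have hmul := wrE_mul' G H (pointConfE G H s((1 : G), t) h₀) (confE G H q' h)
      (confE G H (Fin.cons t q') (Fin.cons h₀ h))
      (pointConfE_finite G H s((1 : G), t) h₀) (confE_finite G H q' h)
      (confE_finite G H (Fin.cons t q') (Fin.cons h₀ h)) t ((List.ofFn q').prod)
      ((List.ofFn (Fin.cons t q')).prod) (by rw [confE_cons]; rfl) hg
    rw [hmul, ← pow_succ']

lemma image_cons_univ {X : Type*} [DecidableEq X] {n : ℕ} (e₀ : X) (E : Fin n → X) :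
    Finset.image (Fin.cons (α := fun _ => X) e₀ E) Finset.univ
      = insert e₀ (Finset.image E Finset.univ) := by
  ext x
  simp only [Finset.mem_image, Finset.mem_insert, Finset.mem_univ, true_and]
  rw [Fin.exists_fin_succ]
  simp [Fin.cons_succ, eq_comm]

lemma count_aux {X : Type} [DecidableEq X] : ∀ (n : ℕ) (E : Fin n → X) (A : Finset X),
    (∑ h : Fin n → H, if ∀ e ∉ A, fProdH H E h e = 1 then (1 : ℝ) else 0)
      = (Fintype.card H : ℝ) ^ (n - (Finset.image E Finset.univ \ A).card)
  | 0, E, A => by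
    rw [Fintype.sum_subsingleton _ (fun i : Fin 0 => (1 : H))]
    rw [if_pos fun e _ => by simp [fProdH]]
    simp
  | (n + 1), E, A => by
    obtain ⟨e₀, E', rfl⟩ : ∃ e₀ E', E = Fin.cons e₀ E' :=
      ⟨E 0, Fin.tail E, (Fin.cons_self_tail E).symm⟩
    rw [sum_pi_cons]
    by_cases he₀ : e₀ ∈ A
    · have hcond : ∀ (h₀ : H) (h : Fin n → H),
          (∀ e ∉ A, fProdH H (Fin.cons e₀ E') (Fin.cons h₀ h) e = 1)
            ↔ (∀ e ∉ A, fProdH H E' h e = 1) := by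
        intro h₀ h
        refine forall_congr' fun e => imp_congr_right fun heA => ?_
        rw [fProdH_cons, if_neg (fun hh => heA (by rw [← hh]; exact he₀)), one_mul]
      have hstep : ∀ h₀ : H,
          (∑ h : Fin n → H,
              if ∀ e ∉ A, fProdH H (Fin.cons e₀ E') (Fin.cons h₀ h) e = 1
              then (1 : ℝ) else 0)
            = (Fintype.card H : ℝ) ^ (n - (Finset.image E' Finset.univ \ A).card) := by
        intro h₀
        rw [← count_aux n E' A]
        exact Finset.sum_congr rfl fun h _ => if_congr (hcond h₀ h) rfl rfl
      rw [Finset.sum_congr rfl fun h₀ _ => hstep h₀, Finset.sum_const,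
        Finset.card_univ, nsmul_eq_mul]
      have himg : Finset.image (Fin.cons (α := fun _ => X) e₀ E') Finset.univ \ A
          = Finset.image E' Finset.univ \ A := by
        rw [image_cons_univ, Finset.insert_sdiff_of_mem _ he₀]
      rw [himg]
      have hd : (Finset.image E' Finset.univ \ A).card ≤ n :=
        le_trans (Finset.card_le_card (Finset.sdiff_subset))
          (le_trans Finset.card_image_le (by simp))
      rw [show n + 1 - (Finset.image E' Finset.univ \ A).card
          = (n - (Finset.image E' Finset.univ \ A).card) + 1 by omega, pow_succ']
    · have hcond : ∀ (h₀ : H) (h : Fin n → H),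
          (∀ e ∉ A, fProdH H (Fin.cons e₀ E') (Fin.cons h₀ h) e = 1)
            ↔ (h₀ = (fProdH H E' h e₀)⁻¹ ∧ ∀ e ∉ insert e₀ A, fProdH H E' h e = 1) := by
        intro h₀ h
        constructor
        · intro hall
          have h1 := hall e₀ he₀
          rw [fProdH_cons, if_pos rfl] at h1
          refine ⟨eq_inv_of_mul_eq_one_left h1, fun e heA => ?_⟩
          rw [Finset.mem_insert, not_or] at heA
          have h2 := hall e heA.2
          rwa [fProdH_cons, if_neg (fun hh => heA.1 hh.symm), one_mul] at h2
        · rintro ⟨rfl, hrest⟩ e heA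
          rw [fProdH_cons]
          by_cases hee : e₀ = e
          · subst hee
            rw [if_pos rfl, inv_mul_cancel]
          · rw [if_neg hee, one_mul]
            exact hrest e (by
              rw [Finset.mem_insert, not_or]
              exact ⟨fun hh => hee hh.symm, heA⟩)
      rw [Finset.sum_comm]
      have hstep : ∀ h : Fin n → H,
          (∑ h₀ : H,
              if ∀ e ∉ A, fProdH H (Fin.cons e₀ E') (Fin.cons h₀ h) e = 1
              then (1 : ℝ) else 0)
            = (if ∀ e ∉ insert e₀ A, fProdH H E' h e = 1 then (1 : ℝ) else 0) := by
        intro h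
        rw [Finset.sum_congr rfl fun h₀ _ => if_congr (hcond h₀ h) rfl rfl]
        simp only [ite_and]
        rw [Finset.sum_ite_eq' Finset.univ ((fProdH H E' h e₀)⁻¹)
          (fun _ => if ∀ e ∉ insert e₀ A, fProdH H E' h e = 1 then (1 : ℝ) else 0)]
        simp
      rw [Finset.sum_congr rfl fun h _ => hstep h, count_aux n E' (insert e₀ A)]
      congr 1
      rw [image_cons_univ, Finset.insert_sdiff_of_notMem _ he₀,
        Finset.sdiff_insert]
      have h1 : insert e₀ (Finset.image E' Finset.univ \ A)
          = insert e₀ ((Finset.image E' Finset.univ \ A).erase e₀) := by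
        ext x
        by_cases hx : x = e₀ <;>
          simp [Finset.mem_insert, Finset.mem_erase, hx]
      rw [h1, Finset.card_insert_of_notMem (Finset.notMem_erase _ _)]
      omega

lemma count_conf (n : ℕ) (q : Fin n → G) :
    (∑ h : Fin n → H, if confE G H q h = 1
        then ((Fintype.card H : ℝ))⁻¹ ^ n else 0)
      = ((Fintype.card H : ℝ))⁻¹
          ^ (Finset.image (fun k : Fin n => edgeAt G q ↑k) Finset.univ).card := by
  have hne : (Fintype.card H : ℝ) ≠ 0 := by
    exact_mod_cast Fintype.card_ne_zero
  have h1 : ∀ h : Fin n → H, (confE G H q h = 1)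
      ↔ (∀ e ∉ (∅ : Finset (Sym2 G)), fProdH H (fun k : Fin n => edgeAt G q ↑k) h e = 1) := by
    intro h
    simp only [Finset.notMem_empty, not_false_iff, true_implies]
    constructor
    · intro hh e
      exact congrFun hh e
    · intro hh
      funext e
      exact hh e
  have h2 : ∀ h : Fin n → H, (if confE G H q h = 1
        then ((Fintype.card H : ℝ))⁻¹ ^ n else 0)
      = ((Fintype.card H : ℝ))⁻¹ ^ n *
        (if ∀ e ∉ (∅ : Finset (Sym2 G)), fProdH H (fun k : Fin n => edgeAt G q ↑k) h e = 1
          then (1 : ℝ) else 0) := by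
    intro h
    rw [if_congr (h1 h) rfl rfl, mul_ite, mul_one, mul_zero]
  rw [Finset.sum_congr rfl fun h _ => h2 h, ← Finset.mul_sum,
    count_aux H n (fun k : Fin n => edgeAt G q ↑k) ∅, Finset.sdiff_empty]
  have hd : (Finset.image (fun k : Fin n => edgeAt G q ↑k) Finset.univ).card ≤ n :=
    le_trans Finset.card_image_le (by simp)
  rw [pow_sub₀ _ hne hd, inv_pow, ← mul_assoc,
    inv_mul_cancel₀ (pow_ne_zero n hne), one_mul, inv_pow]

end Helpers

/-- (Lamps on edges.)  Let `μ` be a symmetric probability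
measure supported on the finite symmetric generating set `S` of `G`, `H` a
finite group, `p = 1/|H|`, and consider the random walk on `(⊕_E H) ⋊ G` with
law `μ̃_ed = ∑_{t ∈ S} μ(t) · ν_{[e,t]} * δ_t` (i.e. `μ̃_ed(η,g) = μ(g)/|H|`
iff `g ∈ S` and `supp η ⊆ {[e,g]}`).  Then `μ̃_ed^{(n)}(1,e)` equals the
expectation of `p^{#distinct edges crossed}` over the `n`-step `μ`-walks on
`G` returning to `e`. -/
theorem edge_lamplighter_return_probability (G H : Type) [Group G] [Group H] [Fintype H]
    (S : Finset G) (hS : ∀ t ∈ S, t⁻¹ ∈ S)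
    (μ : MonoidAlgebra ℝ G) (hμpos : ∀ g : G, 0 ≤ μ.coeff g)
    (hμsupp : ↑μ.coeff.support ⊆ (S : Set G)) (hμsym : ∀ g : G, μ.coeff g⁻¹ = μ.coeff g)
    (hμprob : ∑ g ∈ μ.coeff.support, μ.coeff g = 1) (n : ℕ) :
    ((∑ t ∈ S, μ.coeff t • (nuEdge G H s((1 : G), t) * deltaGE G H t)) ^ n).coeff
        (1 : WreathE G H)
      = ∑ q : Fin n → {g : G // g ∈ μ.coeff.support},
          (if (List.ofFn fun i => (q i : G)).prod = 1 then
            (∏ i, μ.coeff (q i : G)) *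
              ((Fintype.card H : ℝ))⁻¹ ^
                (Finset.image
                  (fun k : Fin n =>
                    s((((List.ofFn fun i => (q i : G)).take k).prod),
                      (((List.ofFn fun i => (q i : G)).take (k + 1)).prod)))
                  Finset.univ).card
          else 0) := by
  have hSsub : μ.coeff.support ⊆ S := fun x hx => hμsupp hx
  have h0 : (∑ t ∈ S, μ.coeff t • (nuEdge G H s((1 : G), t) * deltaGE G H t))
      = ∑ t ∈ μ.coeff.support, μ.coeff t • stepE G H t :=
    (Finset.sum_subset hSsub fun x _ hx => by
      rw [Finsupp.notMem_support_iff.mp hx, zero_smul]).symm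
  rw [h0, pow_eq_sum_ofFn μ.coeff.support (fun t => μ.coeff t • stepE G H t) n,
    MonoidAlgebra.coeff_sum, Finset.sum_apply']
  refine Finset.sum_congr rfl fun q _ => ?_
  rw [prod_ofFn_smul n (fun k => μ.coeff (q k : G)) (fun k => stepE G H (q k : G)),
    prod_stepE G H n (fun k => (q k : G)), MonoidAlgebra.coeff_smul_apply, MonoidAlgebra.coeff_sum, Finset.sum_apply']
  simp only [MonoidAlgebra.coeff_single, Finsupp.single_apply, wrE_eq_one]
  by_cases hp : (List.ofFn fun i => (q i : G)).prod = 1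
  · rw [if_pos hp]
    simp only [hp, and_true]
    rw [count_conf G H n (fun k => (q k : G)), smul_eq_mul]
    congr 2
  · rw [if_neg hp]
    simp only [hp, and_false, if_false]
    simp
end
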